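/- arXiv:2510.10146 — 3 statements merged into one kernel-verified Lean document; each statement's English description precedes it below -/
import Mathlib

section
/- Let (a_n)_{n≥1} satisfy 0 < α ≤ a_n ≤ M, and for each n let f_n : ℝ → ℝ be C¹ and convex with |f_n(t)| ≤ β_n(1+t²) for all t, where (β_n) ∈ s. For x = (x_n) ∈ s define g_n(x) := a_n x_n + f_n'(x_n). Then the sequence (g_n(x))_{n≥1} is bounded: sup_n |g_n(x)| < ∞; in particular it is a tempered sequence, i.e. it belongs to the dual space t = ∪_{k∈ℕ} { y : sup_n |y_n| n^{−k} < ∞ }. -/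
/-- The space `s` of rapidly decreasing sequences (indexed so that `x n` represents the
`(n+1)`-st term of the paper's sequence `(x_n)_{n ≥ 1}`). -/
def InS (x : ℕ → ℝ) : Prop :=
  ∀ k : ℕ, ∃ C : ℝ, ∀ n : ℕ, |x n| * ((n : ℝ) + 1) ^ k ≤ C

/-- Derivative bound for a convex differentiable function with quadratic growth. -/
lemma deriv_bound_of_convex (f : ℝ → ℝ) (B : ℝ) (hC1 : ContDiff ℝ 1 f)
    (hconv : ConvexOn ℝ Set.univ f) (hg : ∀ t, |f t| ≤ B * (1 + t ^ 2)) (t : ℝ) :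
    |deriv f t| ≤ 2 * B * (1 + (|t| + 1) ^ 2) := by
  have hd : ∀ s : ℝ, DifferentiableAt ℝ f s := fun s =>
    (hC1.differentiable one_ne_zero).differentiableAt
  have hB : 0 ≤ B := by
    have := hg 0
    nlinarith [abs_nonneg (f 0)]
  have hbnd : ∀ s : ℝ, |s| ≤ |t| + 1 → |f s| ≤ B * (1 + (|t| + 1) ^ 2) := by
    intro s hs
    refine (hg s).trans ?_
    have : s ^ 2 ≤ (|t| + 1) ^ 2 := by
      rw [← sq_abs s]
      exact pow_le_pow_left₀ (abs_nonneg s) hs 2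
    nlinarith
  have h1 : deriv f t ≤ f (t + 1) - f t := by
    have := hconv.deriv_le_slope (Set.mem_univ t) (Set.mem_univ (t + 1))
      (by linarith) (hd t)
    rwa [slope_def_field, show t + 1 - t = (1:ℝ) by ring, div_one] at this
  have h2 : f t - f (t - 1) ≤ deriv f t := by
    have := hconv.slope_le_deriv (Set.mem_univ (t - 1)) (Set.mem_univ t)
      (by linarith) (hd t)
    rwa [slope_def_field, show t - (t - 1) = (1:ℝ) by ring, div_one] at this
  have ha : |f (t + 1)| ≤ B * (1 + (|t| + 1) ^ 2) := by
    refine hbnd _ ((abs_add_le t 1).trans ?_); simp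
  have hb : |f (t - 1)| ≤ B * (1 + (|t| + 1) ^ 2) := by
    refine hbnd _ ?_
    calc |t - 1| ≤ |t| + |(1:ℝ)| := abs_sub t 1
    _ = |t| + 1 := by simp
  have hc : |f t| ≤ B * (1 + (|t| + 1) ^ 2) := hbnd t (by linarith [abs_nonneg t])
  rw [abs_le]
  constructor
  · obtain ⟨q1, q2⟩ := abs_le.mp hb; obtain ⟨q3, q4⟩ := abs_le.mp hc; nlinarith
  · obtain ⟨q1, q2⟩ := abs_le.mp ha; obtain ⟨q3, q4⟩ := abs_le.mp hc; nlinarith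

/-- for `x ∈ s` and `g_n(x) := a_n x_n + f_n'(x_n)`, the sequence `(g_n(x))`
is bounded; in particular it is a tempered sequence, i.e. it belongs to
`t = ⋃_k { y | sup_n |y_n| n^{-k} < ∞ }`. -/
theorem stmt_5 (a β : ℕ → ℝ) (α M : ℝ) (f : ℕ → ℝ → ℝ)
    (hα : 0 < α) (ha : ∀ n, α ≤ a n ∧ a n ≤ M)
    (hC1 : ∀ n, ContDiff ℝ 1 (f n)) (hconv : ∀ n, ConvexOn ℝ Set.univ (f n))
    (hgrowth : ∀ n t, |f n t| ≤ β n * (1 + t ^ 2)) (hβ : InS β)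
    (x : ℕ → ℝ) (hx : InS x) :
    (∃ C : ℝ, ∀ n : ℕ, |a n * x n + deriv (f n) (x n)| ≤ C) ∧
    (∃ k : ℕ, ∃ C : ℝ, ∀ n : ℕ,
      |a n * x n + deriv (f n) (x n)| * (((n : ℝ) + 1) ^ k)⁻¹ ≤ C) := by
  obtain ⟨Cx, hCx⟩ := hx 0
  obtain ⟨Cβ, hCβ⟩ := hβ 0
  have hCx' : ∀ n, |x n| ≤ Cx := by intro n; have := hCx n; simpa using this
  have hCβ' : ∀ n, β n ≤ Cβ := by
    intro n; have := hCβ n; simp at this; exact (le_abs_self _).trans this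
  have hβnn : ∀ n, 0 ≤ β n := by
    intro n
    have := hgrowth n 0
    nlinarith [abs_nonneg (f n 0)]
  have hCxnn : 0 ≤ Cx := le_trans (abs_nonneg _) (hCx' 0)
  have hCβnn : 0 ≤ Cβ := le_trans (hβnn 0) (hCβ' 0)
  have hM : 0 < M := lt_of_lt_of_le hα (le_trans (ha 0).1 (ha 0).2)
  have key : ∀ n, |a n * x n + deriv (f n) (x n)| ≤
      M * Cx + 2 * Cβ * (1 + (Cx + 1) ^ 2) := by
    intro n
    have hder := deriv_bound_of_convex (f n) (β n) (hC1 n) (hconv n) (hgrowth n) (x n)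
    have h1 : |a n * x n| ≤ M * Cx := by
      rw [abs_mul]
      have han : |a n| ≤ M := by
        rw [abs_of_pos (lt_of_lt_of_le hα (ha n).1)]; exact (ha n).2
      exact mul_le_mul han (hCx' n) (abs_nonneg _) hM.le
    have h2 : |deriv (f n) (x n)| ≤ 2 * Cβ * (1 + (Cx + 1) ^ 2) := by
      refine hder.trans ?_
      have hx1 : |x n| + 1 ≤ Cx + 1 := by linarith [hCx' n]
      have : (|x n| + 1) ^ 2 ≤ (Cx + 1) ^ 2 :=
        pow_le_pow_left₀ (by positivity) hx1 2
      nlinarith [hβnn n, hCβ' n, abs_nonneg (x n)]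
    calc |a n * x n + deriv (f n) (x n)| ≤ |a n * x n| + |deriv (f n) (x n)| := abs_add_le _ _
    _ ≤ _ := by linarith
  refine ⟨⟨_, key⟩, 0, M * Cx + 2 * Cβ * (1 + (Cx + 1) ^ 2), fun n => ?_⟩
  simpa using key n
end

section
/- Let (a_n)_{n≥1} satisfy 0 < α ≤ a_n ≤ M; for each n let f_n : ℝ → ℝ be C¹ and convex with |f_n(t)| ≤ β_n(1+t²), (β_n) ∈ s, and f_n(t) ≥ −γ_n with γ_n ≥ 0, Σ γ_n < ∞, and let F(x) = (1/2) Σ a_n x_n² + Σ f_n(x_n) on s. Then F admits a unique global minimum on s: there exists exactly one x₀ ∈ s such that F(x₀) ≤ F(x) for all x ∈ s. -/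
/-- The `𝓕ₛ`-functional `F(x) = (1/2) Σ a_n x_n² + Σ f_n(x_n)`. -/
noncomputable def Ffun (a : ℕ → ℝ) (f : ℕ → ℝ → ℝ) (x : ℕ → ℝ) : ℝ :=
  (1 / 2) * ∑' n : ℕ, a n * x n ^ 2 + ∑' n : ℕ, f n (x n)


lemma InS.bounded {x : ℕ → ℝ} (hx : InS x) : ∃ C, 0 ≤ C ∧ ∀ n, |x n| ≤ C := by
  obtain ⟨C, hC⟩ := hx 0
  refine ⟨C, le_trans (abs_nonneg (x 0)) (by simpa using hC 0), fun n => by simpa using hC n⟩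

lemma InS.summable_abs {x : ℕ → ℝ} (hx : InS x) : Summable (fun n => |x n|) := by
  obtain ⟨C, hC⟩ := hx 2
  have hs : Summable (fun n : ℕ => C * (1 / ((n : ℝ) + 1) ^ 2)) := by
    apply Summable.mul_left
    have := (summable_nat_add_iff 1).mpr
      (Real.summable_one_div_nat_pow.mpr (by norm_num : (1:ℕ) < 2))
    apply this.congr
    intro n; push_cast; ring
  refine Summable.of_nonneg_of_le (fun n => abs_nonneg _) (fun n => ?_) hs
  have hp : (0:ℝ) < ((n : ℝ) + 1) ^ 2 := by positivity
  rw [mul_one_div, le_div_iff₀ hp]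
  exact hC n

lemma InS.summable_sq {x : ℕ → ℝ} (hx : InS x) : Summable (fun n => (x n) ^ 2) := by
  obtain ⟨C, hC0, hC⟩ := hx.bounded
  refine Summable.of_nonneg_of_le (fun n => sq_nonneg _) (fun n => ?_) (hx.summable_abs.mul_left C)
  calc (x n) ^ 2 = |x n| * |x n| := by rw [sq, ← abs_mul_abs_self]
  _ ≤ C * |x n| := mul_le_mul_of_nonneg_right (hC n) (abs_nonneg _)

lemma InS.of_le {t β : ℕ → ℝ} {D : ℝ} (hβ : InS β) (hD : 0 ≤ D)
    (h : ∀ n, |t n| ≤ D * |β n|) : InS t := by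
  intro k
  obtain ⟨C, hC⟩ := hβ k
  refine ⟨D * C, fun n => ?_⟩
  have h1 : (0:ℝ) ≤ ((n:ℝ)+1)^k := by positivity
  calc |t n| * ((n:ℝ)+1)^k ≤ (D * |β n|) * ((n:ℝ)+1)^k :=
        mul_le_mul_of_nonneg_right (h n) h1
  _ = D * (|β n| * ((n:ℝ)+1)^k) := by ring
  _ ≤ D * C := mul_le_mul_of_nonneg_left (hC n) hD

lemma InS.half_add {y z : ℕ → ℝ} (hy : InS y) (hz : InS z) :
    InS (fun n => (y n + z n) / 2) := by
  intro k
  obtain ⟨C, hC⟩ := hy k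
  obtain ⟨C', hC'⟩ := hz k
  refine ⟨C + C', fun n => ?_⟩
  have h1 : (0:ℝ) ≤ ((n:ℝ)+1)^k := by positivity
  have h2 : |(y n + z n)/2| ≤ |y n| + |z n| := by
    rw [abs_div]
    calc |y n + z n| / |(2:ℝ)| ≤ (|y n| + |z n|)/|(2:ℝ)| := by
          apply div_le_div_of_nonneg_right (abs_add_le _ _) (by norm_num)
    _ ≤ |y n| + |z n| := by
        rw [abs_two]; linarith [abs_nonneg (y n), abs_nonneg (z n)]
  calc |(y n + z n)/2| * ((n:ℝ)+1)^k ≤ (|y n| + |z n|) * ((n:ℝ)+1)^k :=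
        mul_le_mul_of_nonneg_right h2 h1
  _ = |y n| * ((n:ℝ)+1)^k + |z n| * ((n:ℝ)+1)^k := by ring
  _ ≤ C + C' := add_le_add (hC n) (hC' n)

lemma InS.sub {y z : ℕ → ℝ} (hy : InS y) (hz : InS z) :
    InS (fun n => y n - z n) := by
  intro k
  obtain ⟨C, hC⟩ := hy k
  obtain ⟨C', hC'⟩ := hz k
  refine ⟨C + C', fun n => ?_⟩
  have h1 : (0:ℝ) ≤ ((n:ℝ)+1)^k := by positivity
  calc |y n - z n| * ((n:ℝ)+1)^k ≤ (|y n| + |z n|) * ((n:ℝ)+1)^k :=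
        mul_le_mul_of_nonneg_right (abs_sub _ _) h1
  _ = |y n| * ((n:ℝ)+1)^k + |z n| * ((n:ℝ)+1)^k := by ring
  _ ≤ C + C' := add_le_add (hC n) (hC' n)

/-- Existence of a global minimizer for a single coordinate function. -/
lemma exists_coord_min {α an γn : ℝ} {fn : ℝ → ℝ} (hα : 0 < α) (han : α ≤ an)
    (hC1 : ContDiff ℝ 1 fn) (hlb : ∀ t, -γn ≤ fn t) (hγ0 : 0 ≤ γn) :
    ∃ t₀ : ℝ, ∀ t, (1/2) * (an * t₀^2) + fn t₀ ≤ (1/2) * (an * t^2) + fn t := by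
  set g : ℝ → ℝ := fun t => (1/2) * (an * t^2) + fn t with hg
  have hcont : Continuous g := by
    apply Continuous.add (by continuity) hC1.continuous
  have hglb : ∀ t, α/2 * t^2 - γn ≤ g t := by
    intro t
    have := hlb t
    have h2 : α * t^2 ≤ an * t^2 := mul_le_mul_of_nonneg_right han (sq_nonneg t)
    simp only [hg]; nlinarith
  set R : ℝ := Real.sqrt ((2/α) * (γn + |fn 0| + 1)) with hR
  have hR0 : 0 ≤ R := Real.sqrt_nonneg _
  have hRsq : α/2 * R^2 - γn = |fn 0| + 1 := by
    rw [hR, Real.sq_sqrt (by positivity)]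
    field_simp
    ring
  obtain ⟨t₀, ht₀mem, ht₀⟩ := (isCompact_Icc (a := -R) (b := R)).exists_isMinOn
    ⟨0, by constructor <;> simp [hR0, neg_nonpos.mpr hR0]⟩ hcont.continuousOn
  refine ⟨t₀, fun t => ?_⟩
  by_cases ht : t ∈ Set.Icc (-R) R
  · exact ht₀ ht
  · have h1 : R^2 < t^2 := by
      simp only [Set.mem_Icc, not_and_or, not_le] at ht
      rcases ht with h | h <;> nlinarith
    have h2 : g 0 < g t := by
      have := hglb t
      have : α/2 * R^2 - γn < g t := by nlinarith
      rw [hRsq] at this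
      have h3 : g 0 = fn 0 := by simp [hg]
      rw [h3]
      calc fn 0 ≤ |fn 0| := le_abs_self _
      _ < g t := by linarith
    exact le_of_lt (lt_of_le_of_lt (ht₀ ⟨by simpa using neg_nonpos.mpr hR0, hR0⟩) h2)

/-- A coordinate minimizer is bounded by a multiple of `β n`. -/
lemma coord_min_bound {α an βn : ℝ} {fn : ℝ → ℝ} (hα : 0 < α) (han : α ≤ an)
    (hC1 : ContDiff ℝ 1 fn) (hconv : ConvexOn ℝ Set.univ fn)
    (hgrowth : ∀ t, |fn t| ≤ βn * (1 + t ^ 2))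
    {t₀ K : ℝ} (hmin : ∀ t, (1/2) * (an * t₀^2) + fn t₀ ≤ (1/2) * (an * t^2) + fn t)
    (hK : t₀^2 ≤ K^2) (hK0 : 0 ≤ K) :
    |t₀| ≤ (2 + K^2 + (K+1)^2) / α * |βn| := by
  have hdiff : Differentiable ℝ fn := hC1.differentiable one_ne_zero
  have hder : HasDerivAt (fun t => (1/2) * (an * t^2) + fn t)
      (an * t₀ + deriv fn t₀) t₀ := by
    have h1 : HasDerivAt (fun t : ℝ => (1/2) * (an * t^2)) (an * t₀) t₀ := by
      have := ((hasDerivAt_pow 2 t₀).const_mul an).const_mul (1/2:ℝ)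
      exact this.congr_deriv (by norm_num; ring)
    exact h1.add (hdiff t₀).hasDerivAt
  have hzero : an * t₀ + deriv fn t₀ = 0 :=
    IsLocalMin.hasDerivAt_eq_zero (Filter.Eventually.of_forall hmin) hder
  have hβ0 : 0 ≤ βn := by have := hgrowth 0; simp at this; linarith [abs_nonneg (fn 0)]
  have habs : |t₀| ≤ K := by nlinarith [sq_abs t₀, abs_nonneg t₀]
  have hup : deriv fn t₀ ≤ fn (t₀ + 1) - fn t₀ := by
    have := hconv.deriv_le_slope (Set.mem_univ t₀) (Set.mem_univ (t₀+1))
      (by linarith) (hdiff t₀)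
    rwa [slope_def_field, show t₀ + 1 - t₀ = 1 by ring, div_one] at this
  have hdown : fn t₀ - fn (t₀ - 1) ≤ deriv fn t₀ := by
    have := hconv.slope_le_deriv (Set.mem_univ (t₀-1)) (Set.mem_univ t₀)
      (by linarith) (hdiff t₀)
    rwa [slope_def_field, show t₀ - (t₀ - 1) = 1 by ring, div_one] at this
  set D : ℝ := 2 + K^2 + (K+1)^2 with hD
  have hderb : |deriv fn t₀| ≤ βn * D := by
    have g1 := hgrowth (t₀ + 1)
    have g2 := hgrowth t₀
    have g3 := hgrowth (t₀ - 1)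
    rw [abs_le]
    constructor
    · have h2 : fn (t₀-1) ≤ βn * (1 + (t₀-1)^2) := (le_abs_self _).trans g3
      have h3 : -(βn * (1 + t₀^2)) ≤ fn t₀ := neg_le_of_abs_le g2
      have h4 : (t₀-1)^2 ≤ (K+1)^2 := by nlinarith [abs_le.mp habs]
      nlinarith [hdown, hK]
    · have h1 : fn (t₀+1) ≤ βn * (1 + (t₀+1)^2) := (le_abs_self _).trans g1
      have h2 : -(βn * (1 + t₀^2)) ≤ fn t₀ := neg_le_of_abs_le g2
      have h3 : (t₀+1)^2 ≤ (K+1)^2 := by nlinarith [abs_le.mp habs]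
      nlinarith [hup, hK]
  have key : α * |t₀| ≤ βn * D := by
    have h1 : α * |t₀| ≤ an * |t₀| := mul_le_mul_of_nonneg_right han (abs_nonneg _)
    have h2 : an * |t₀| = |an * t₀| := by
      rw [abs_mul, abs_of_nonneg (by linarith : (0:ℝ) ≤ an)]
    have h3 : |an * t₀| = |deriv fn t₀| := by
      rw [show an * t₀ = -(deriv fn t₀) by linarith, abs_neg]
    linarith [h1.trans_eq (h2.trans h3), hderb]
  rw [abs_of_nonneg hβ0, div_mul_eq_mul_div, le_div_iff₀ hα]
  calc |t₀| * α = α * |t₀| := by ring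
  _ ≤ βn * D := key
  _ = D * βn := by ring



/-- Auxiliary coordinate function. -/
noncomputable def gAux (a : ℕ → ℝ) (f : ℕ → ℝ → ℝ) (n : ℕ) (t : ℝ) : ℝ :=
  (1/2) * (a n * t^2) + f n t

/-- an `𝓕ₛ`-functional admits a unique global minimum on `s`: there is
exactly one `x₀ ∈ s` with `F(x₀) ≤ F(x)` for all `x ∈ s`. -/
theorem stmt_11 (a β γ : ℕ → ℝ) (α M : ℝ) (f : ℕ → ℝ → ℝ)
    (hα : 0 < α) (ha : ∀ n, α ≤ a n ∧ a n ≤ M)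
    (hC1 : ∀ n, ContDiff ℝ 1 (f n)) (hconv : ∀ n, ConvexOn ℝ Set.univ (f n))
    (hgrowth : ∀ n t, |f n t| ≤ β n * (1 + t ^ 2)) (hβ : InS β)
    (hγ0 : ∀ n, 0 ≤ γ n) (hγ : Summable γ) (hlb : ∀ n t, -γ n ≤ f n t) :
    ∃! x₀ : {x : ℕ → ℝ // InS x}, ∀ x : {x : ℕ → ℝ // InS x},
      Ffun a f x₀.1 ≤ Ffun a f x.1 := by
  -- abbreviations
  set g : ℕ → ℝ → ℝ := gAux a f with hgdefs
  have hgdef : ∀ n t, g n t = (1/2) * (a n * t^2) + f n t := fun n t => rfl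
  have hβ0 : ∀ n, 0 ≤ β n := fun n => by
    have := hgrowth n 0; simp at this; linarith [abs_nonneg (f n 0)]
  -- summability facts
  have hSa : ∀ x : ℕ → ℝ, InS x → Summable (fun n => a n * x n ^ 2) := by
    intro x hx
    exact Summable.of_nonneg_of_le
      (fun n => mul_nonneg (le_trans hα.le (ha n).1) (sq_nonneg _))
      (fun n => mul_le_mul_of_nonneg_right (ha n).2 (sq_nonneg _)) (hx.summable_sq.mul_left M)
  have hSf : ∀ x : ℕ → ℝ, InS x → Summable (fun n => f n (x n)) := by
    intro x hx
    obtain ⟨C, hC0, hC⟩ := hx.bounded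
    have hβs : Summable β := by
      refine Summable.of_norm ?_
      have := hβ.summable_abs
      simpa [Real.norm_eq_abs] using this
    have hs : Summable (fun n => (1 + C^2) * β n) := hβs.mul_left _
    refine Summable.of_norm (Summable.of_nonneg_of_le (fun n => norm_nonneg _) (fun n => ?_) hs)
    have h1 : x n ^ 2 ≤ C ^ 2 := by
      have := hC n; nlinarith [abs_nonneg (x n), neg_abs_le (x n), le_abs_self (x n)]
    calc ‖f n (x n)‖ ≤ β n * (1 + x n ^ 2) := hgrowth n (x n)
    _ ≤ (1 + C^2) * β n := by nlinarith [hβ0 n]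
  have hSg : ∀ x : ℕ → ℝ, InS x → Summable (fun n => g n (x n)) := by
    intro x hx
    have := ((hSa x hx).mul_left (1/2)).add (hSf x hx)
    apply this.congr
    intro n
    rw [hgdef]
  have hF : ∀ x : ℕ → ℝ, InS x → Ffun a f x = ∑' n, g n (x n) := by
    intro x hx
    have hrw : ∑' n, g n (x n) = ∑' n, ((1/2) * (a n * x n ^ 2) + f n (x n)) := by
      exact tsum_congr (fun n => hgdef n (x n))
    rw [hrw, Ffun, Summable.tsum_add ((hSa x hx).mul_left _) (hSf x hx), tsum_mul_left]
  -- the coordinatewise minimizers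
  have hmin : ∀ n, ∃ t₀ : ℝ, ∀ t, g n t₀ ≤ g n t := by
    intro n
    obtain ⟨t₀, ht⟩ := exists_coord_min hα (ha n).1 (hC1 n) (hlb n) (hγ0 n)
    exact ⟨t₀, fun t => by rw [hgdef, hgdef]; exact ht t⟩
  choose t₀ ht₀ using hmin
  -- uniform bound on the minimizers
  obtain ⟨Bβ, hBβ0, hBβ⟩ := hβ.bounded
  set Γ : ℝ := ∑' n, γ n with hΓ
  have hγle : ∀ n, γ n ≤ Γ := fun n => Summable.le_tsum hγ n (fun i _ => hγ0 i)
  set K : ℝ := Real.sqrt ((2/α) * (Bβ + Γ)) with hK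
  have hΓ0 : 0 ≤ Γ := le_trans (hγ0 0) (hγle 0)
  have hK0 : 0 ≤ K := Real.sqrt_nonneg _
  have hKsq : K^2 = (2/α) * (Bβ + Γ) := Real.sq_sqrt (by positivity)
  have ht₀sq : ∀ n, (t₀ n)^2 ≤ K^2 := by
    intro n
    have h1 : g n (t₀ n) ≤ g n 0 := ht₀ n 0
    have h2 : g n 0 = f n 0 := by rw [hgdef]; ring
    have h3 : f n 0 ≤ β n := by have := hgrowth n 0; simp at this; linarith [le_abs_self (f n 0)]
    have h4 : α/2 * (t₀ n)^2 - γ n ≤ g n (t₀ n) := by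
      have := hlb n (t₀ n)
      have h5 : α * (t₀ n)^2 ≤ a n * (t₀ n)^2 :=
        mul_le_mul_of_nonneg_right (ha n).1 (sq_nonneg _)
      rw [hgdef]; nlinarith
    have h6 : β n ≤ Bβ := le_trans (le_abs_self _) (hBβ n)
    rw [hKsq]
    have h1' : g n (t₀ n) ≤ f n 0 := h2 ▸ h1
    have h7 : α/2 * (t₀ n)^2 ≤ Bβ + Γ := by linarith [hγle n, h1', h3, h4, h6]
    rw [div_mul_eq_mul_div, le_div_iff₀ hα]
    linarith
  -- the minimizer is in s
  set D : ℝ := (2 + K^2 + (K+1)^2) / α with hD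
  have hD0 : 0 ≤ D := by positivity
  have ht₀b : ∀ n, |t₀ n| ≤ D * |β n| := by
    intro n
    have hm : ∀ t, (1/2) * (a n * (t₀ n)^2) + f n (t₀ n) ≤ (1/2) * (a n * t^2) + f n t := by
      intro t; have := ht₀ n t; rwa [hgdef, hgdef] at this
    have := coord_min_bound hα (ha n).1 (hC1 n) (hconv n) (hgrowth n) hm (ht₀sq n) hK0
    simpa [hD, mul_comm] using this
  have hx₀ : InS t₀ := InS.of_le hβ hD0 ht₀b
  -- minimality
  have hminF : ∀ x : {x : ℕ → ℝ // InS x}, Ffun a f t₀ ≤ Ffun a f x.1 := by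
    intro ⟨x, hx⟩
    rw [hF t₀ hx₀, hF x hx]
    exact Summable.tsum_le_tsum (fun n => ht₀ n (x n)) (hSg t₀ hx₀) (hSg x hx)
  refine ⟨⟨t₀, hx₀⟩, hminF, ?_⟩
  -- uniqueness
  rintro ⟨y, hy⟩ hymin
  have heq : Ffun a f y = Ffun a f t₀ :=
    le_antisymm (hymin ⟨t₀, hx₀⟩) (hminF ⟨y, hy⟩)
  set w : ℕ → ℝ := fun n => (y n + t₀ n) / 2 with hw
  have hwS : InS w := hy.half_add hx₀
  have hterm : ∀ n, g n (w n) ≤ (1/2) * g n (y n) + (1/2) * g n (t₀ n)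
      - (α/8) * (y n - t₀ n)^2 := by
    intro n
    have hcv : f n ((1/2 : ℝ) • y n + (1/2 : ℝ) • t₀ n) ≤
        (1/2 : ℝ) * f n (y n) + (1/2 : ℝ) * f n (t₀ n) := by
      have := (hconv n).2 (Set.mem_univ (y n)) (Set.mem_univ (t₀ n))
        (by norm_num : (0:ℝ) ≤ 1/2) (by norm_num : (0:ℝ) ≤ 1/2) (by norm_num)
      simpa [smul_eq_mul] using this
    have hcv' : f n (w n) ≤ (1/2) * f n (y n) + (1/2) * f n (t₀ n) := by
      have : w n = (1/2 : ℝ) • y n + (1/2 : ℝ) • t₀ n := by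
        simp [hw, smul_eq_mul]; ring
      rw [this]; exact hcv
    have hq : α * (y n - t₀ n)^2 ≤ a n * (y n - t₀ n)^2 :=
      mul_le_mul_of_nonneg_right (ha n).1 (sq_nonneg _)
    rw [hgdef, hgdef, hgdef]
    have hwn : w n = (y n + t₀ n)/2 := rfl
    rw [hwn]
    nlinarith [hcv', hq, sq_nonneg (y n - t₀ n)]
  have hd : InS (fun n => y n - t₀ n) := hy.sub hx₀
  have hSd : Summable (fun n => (y n - t₀ n)^2) := hd.summable_sq
  have hsum : ∑' n, g n (w n) ≤ (1/2) * ∑' n, g n (y n) + (1/2) * ∑' n, g n (t₀ n)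
      - (α/8) * ∑' n, (y n - t₀ n)^2 := by
    have hS1 : Summable (fun n => (1/2) * g n (y n) + (1/2) * g n (t₀ n)
        - (α/8) * (y n - t₀ n)^2) :=
      (((hSg y hy).mul_left _).add ((hSg t₀ hx₀).mul_left _)).sub (hSd.mul_left _)
    calc ∑' n, g n (w n)
        ≤ ∑' n, ((1/2) * g n (y n) + (1/2) * g n (t₀ n) - (α/8) * (y n - t₀ n)^2) :=
          Summable.tsum_le_tsum hterm (hSg w hwS) hS1
    _ = (1/2) * ∑' n, g n (y n) + (1/2) * ∑' n, g n (t₀ n)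
        - (α/8) * ∑' n, (y n - t₀ n)^2 := by
        rw [Summable.tsum_sub (((hSg y hy).mul_left _).add ((hSg t₀ hx₀).mul_left _)) (hSd.mul_left _),
          Summable.tsum_add ((hSg y hy).mul_left _) ((hSg t₀ hx₀).mul_left _),
          tsum_mul_left, tsum_mul_left, tsum_mul_left]
  have hwge : ∑' n, g n (y n) ≤ ∑' n, g n (w n) := by
    have := hymin ⟨w, hwS⟩
    rwa [hF y hy, hF w hwS] at this
  have hGyt : ∑' n, g n (y n) = ∑' n, g n (t₀ n) := by
    rw [← hF y hy, ← hF t₀ hx₀]; exact heq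
  have hdsum : ∑' n, (y n - t₀ n)^2 ≤ 0 := by
    rw [← hGyt] at hsum
    nlinarith [hwge, hsum]
  have hzero : ∀ n, y n = t₀ n := by
    intro n
    have h1 : (y n - t₀ n)^2 ≤ ∑' m, (y m - t₀ m)^2 :=
      Summable.le_tsum hSd n (fun i _ => sq_nonneg _)
    have h2 : (y n - t₀ n)^2 = 0 := le_antisymm (h1.trans hdsum) (sq_nonneg _)
    have := pow_eq_zero_iff (n := 2) (by norm_num) |>.mp h2
    linarith
  exact Subtype.ext (funext hzero)
end

section
/- Let (c_n)_{n≥1} ∈ s. Then for each n ≥ 1 the equation x + (1/n²)·tanh(x) = c_n/n² has a unique real solution x_n*, and the resulting sequence (x_n*)_{n≥1} belongs to s. -/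
lemma tanh_strictMono : StrictMono Real.tanh := by
  intro t u htu
  rw [Real.tanh_eq_sinh_div_cosh, Real.tanh_eq_sinh_div_cosh,
    div_lt_div_iff₀ (Real.cosh_pos t) (Real.cosh_pos u)]
  have h : Real.sinh (t - u) < 0 := by
    rw [show (0:ℝ) = Real.sinh 0 by simp]
    exact Real.sinh_strictMono (by linarith)
  rw [Real.sinh_sub] at h
  linarith

lemma abs_tanh_le_one (t : ℝ) : |Real.tanh t| ≤ 1 := by
  rw [Real.tanh_eq_sinh_div_cosh, abs_div, abs_of_pos (Real.cosh_pos t),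
    div_le_one (Real.cosh_pos t), Real.abs_sinh, ← Real.cosh_abs]
  exact (Real.sinh_lt_cosh _).le

lemma continuous_tanh : Continuous Real.tanh := by
  have : Real.tanh = fun t => Real.sinh t / Real.cosh t := by
    funext t; exact Real.tanh_eq_sinh_div_cosh t
  rw [this]
  exact Real.continuous_sinh.div Real.continuous_cosh fun t => (Real.cosh_pos t).ne'

lemma key (a b : ℝ) (ha : 0 < a) : ∃! t : ℝ, t + a * Real.tanh t = b := by
  set g : ℝ → ℝ := fun t => t + a * Real.tanh t with hg
  have hmono : StrictMono g :=
    strictMono_id.add ((tanh_strictMono.const_mul ha).comp strictMono_id)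
  have hcont : Continuous g := continuous_id.add (continuous_const.mul continuous_tanh)
  have h1 : g (b - a) ≤ b := by
    have := (abs_le.mp (abs_tanh_le_one (b - a))).2
    simp only [hg]
    nlinarith
  have h2 : b ≤ g (b + a) := by
    have := (abs_le.mp (abs_tanh_le_one (b + a))).1
    simp only [hg]
    nlinarith
  have hle : b - a ≤ b + a := by linarith
  obtain ⟨t, _, ht⟩ := intermediate_value_Icc hle hcont.continuousOn ⟨h1, h2⟩
  exact ⟨t, ht, fun y hy => hmono.injective (hy.trans ht.symm)⟩

lemma sol_bound (a b t : ℝ) (ha : 0 ≤ a) (ht : t + a * Real.tanh t = b) : |t| ≤ |b| := by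
  rcases le_or_gt 0 t with h | h
  · have h2 : 0 ≤ Real.tanh t := by
      rw [show (0:ℝ) = Real.tanh 0 by simp]
      exact tanh_strictMono.monotone h
    rw [abs_of_nonneg h, ← ht, abs_of_nonneg (by nlinarith)]
    nlinarith
  · have h2 : Real.tanh t ≤ 0 := by
      rw [show (0:ℝ) = Real.tanh 0 by simp]
      exact tanh_strictMono.monotone h.le
    rw [abs_of_neg h, ← ht, abs_of_nonpos (by nlinarith)]
    nlinarith

/-- for `(c_n) ∈ s`, for each `n ≥ 1` the equation
`x + (1/n²) tanh x = c_n/n²` has a unique real solution `x_n*`, and the sequence `(x_n*)`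
belongs to `s`. (Here index `n : ℕ` stands for the paper's `n + 1`.) -/
theorem stmt_17 (c : ℕ → ℝ) (hc : InS c) :
    ∃ x : ℕ → ℝ, InS x ∧ ∀ n : ℕ,
      (x n + (1 / ((n : ℝ) + 1) ^ 2) * Real.tanh (x n) = c n / ((n : ℝ) + 1) ^ 2) ∧
      (∀ y : ℝ, y + (1 / ((n : ℝ) + 1) ^ 2) * Real.tanh y = c n / ((n : ℝ) + 1) ^ 2 →
        y = x n) := by
  have hpos : ∀ n : ℕ, (0:ℝ) < 1 / ((n : ℝ) + 1) ^ 2 := fun n => by positivity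
  have hEU : ∀ n : ℕ, ∃! t : ℝ,
      t + (1 / ((n : ℝ) + 1) ^ 2) * Real.tanh t = c n / ((n : ℝ) + 1) ^ 2 :=
    fun n => key _ _ (hpos n)
  choose x hx hx' using hEU
  refine ⟨x, ?_, fun n => ⟨hx n, hx' n⟩⟩
  intro k
  obtain ⟨C, hC⟩ := hc k
  refine ⟨C, fun n => ?_⟩
  have hb : |x n| ≤ |c n / ((n : ℝ) + 1) ^ 2| := sol_bound _ _ _ (hpos n).le (hx n)
  have hb2 : |c n / ((n : ℝ) + 1) ^ 2| ≤ |c n| := by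
    rw [abs_div, abs_of_pos (show (0:ℝ) < ((n:ℝ)+1)^2 by positivity)]
    apply div_le_self (abs_nonneg _)
    nlinarith [Nat.cast_nonneg (α := ℝ) n]
  calc |x n| * ((n : ℝ) + 1) ^ k ≤ |c n| * ((n : ℝ) + 1) ^ k := by
        apply mul_le_mul_of_nonneg_right (hb.trans hb2) (by positivity)
    _ ≤ C := hC n
end
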